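/- Let z = (z_x, z_y, z_z) ∈ K_exp* with z_x < 0 and z_z·e = −z_x·e^{z_y/z_x}, and set β = z_y/z_x. Then K_exp ∩ {z}⊥ = {((1−β)y, y, e^{1−β}y) : y ≥ 0}; i.e., the face of the exponential cone exposed by z is the ray generated by (1−β, 1, e^{1−β}). -/
import Mathlib


def Kexp : Set (EuclideanSpace ℝ (Fin 3)) :=
  {v | (0 < v 1 ∧ v 1 * Real.exp (v 0 / v 1) ≤ v 2) ∨ (v 0 ≤ 0 ∧ 0 ≤ v 2 ∧ v 1 = 0)}

theorem exposed_face_Fbeta (z : EuclideanSpace ℝ (Fin 3))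
    (hzdual : ∀ v ∈ Kexp, 0 ≤ v 0 * z 0 + v 1 * z 1 + v 2 * z 2)
    (hzx : z 0 < 0)
    (hzz : z 2 * Real.exp 1 = -(z 0) * Real.exp (z 1 / z 0)) :
    Kexp ∩ {q | q 0 * z 0 + q 1 * z 1 + q 2 * z 2 = 0} =
      {w | ∃ y : ℝ, 0 ≤ y ∧ w 0 = (1 - z 1 / z 0) * y ∧ w 1 = y ∧
        w 2 = Real.exp (1 - z 1 / z 0) * y} := by
  set β := z 1 / z 0 with hβ
  have hz0 : z 0 ≠ 0 := ne_of_lt hzx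
  have hz1 : z 1 = β * z 0 := (div_mul_cancel₀ _ hz0).symm
  have hz2 : z 2 = -z 0 * Real.exp (β - 1) := by
    have h := hzz
    rw [Real.exp_sub]
    field_simp at h ⊢
    linarith [h]
  have hz2pos : 0 < z 2 := by
    have h0' : 0 < -z 0 := by linarith
    rw [hz2]
    exact mul_pos h0' (Real.exp_pos _)
  ext w
  simp only [Set.mem_inter_iff, Set.mem_setOf_eq, Kexp]
  constructor
  · rintro ⟨hK, hperp⟩
    rcases hK with ⟨h1, h2⟩ | ⟨h1, h2, h3⟩
    · -- main branch
      set t := w 0 / w 1 with ht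
      have hw0 : w 0 = t * w 1 := (div_mul_cancel₀ _ (ne_of_gt h1)).symm
      set s := t + β - 1 with hs
      have hEs : Real.exp s = Real.exp t * Real.exp (β - 1) := by
        rw [hs, ← Real.exp_add]; ring_nf
      have hexp : s + 1 ≤ Real.exp s := Real.add_one_le_exp s
      -- from h2 and z2 > 0:
      have hA : w 1 * Real.exp t * z 2 ≤ w 2 * z 2 :=
        mul_le_mul_of_nonneg_right h2 (le_of_lt hz2pos)
      have hsum : w 0 * z 0 + w 1 * z 1 + w 1 * Real.exp t * z 2
          = w 1 * (-z 0) * (Real.exp s - s - 1) := by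
        rw [hw0, hz1, hz2, hEs]; ring
      have hle : w 1 * (-z 0) * (Real.exp s - s - 1) ≤ 0 := by
        rw [← hsum]; linarith [hperp, hA]
      have hpos : 0 < w 1 * (-z 0) := by
        have : 0 < -z 0 := by linarith
        positivity
      have hEeq : Real.exp s - s - 1 = 0 := by
        nlinarith [hexp, hle, hpos]
      have hs0 : s = 0 := by
        by_contra h
        have := Real.add_one_lt_exp h
        nlinarith
      have htval : t = 1 - β := by rw [hs] at hs0; linarith
      refine ⟨w 1, le_of_lt h1, ?_, rfl, ?_⟩
      · rw [hw0, htval]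
      · -- w2 * z2 = w1 * exp t * z2
        have hEt : Real.exp t * Real.exp (β - 1) = 1 := by
          rw [← Real.exp_add, htval]; simp
        have hzero : w 0 * z 0 + w 1 * z 1 + w 1 * Real.exp t * z 2 = 0 := by
          rw [hsum, hEeq]; ring
        have : w 2 * z 2 = w 1 * Real.exp t * z 2 := by linarith
        have hw2 : w 2 = w 1 * Real.exp t :=
          mul_right_cancel₀ (ne_of_gt hz2pos) this
        rw [hw2, htval]; ring
    · -- degenerate branch
      have h01 : 0 ≤ w 0 * z 0 := by nlinarith
      have h02 : 0 ≤ w 2 * z 2 := mul_nonneg h2 (le_of_lt hz2pos)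
      rw [h3] at hperp
      have hw0 : w 0 * z 0 = 0 := by nlinarith
      have hw2 : w 2 * z 2 = 0 := by nlinarith
      refine ⟨0, le_refl 0, ?_, h3, ?_⟩
      · have := mul_eq_zero.mp hw0
        rcases this with h | h
        · rw [h]; ring
        · exact absurd h hz0
      · have := mul_eq_zero.mp hw2
        rcases this with h | h
        · rw [h]; ring
        · exact absurd h (ne_of_gt hz2pos)
  · rintro ⟨y, hy, h0, h1, h2⟩
    have hEt : Real.exp (1 - β) * Real.exp (β - 1) = 1 := by
      rw [← Real.exp_add]; simp
    constructor
    · rcases lt_or_eq_of_le hy with hy' | hy'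
      · left
        refine ⟨by rw [h1]; exact hy', ?_⟩
        have : w 0 / w 1 = 1 - β := by
          rw [h0, h1, mul_div_assoc, div_self (ne_of_gt hy')]; ring
        rw [this, h1, h2]; ring_nf; exact le_refl _
      · right
        refine ⟨by rw [h0, ← hy']; ring_nf; exact le_refl 0, ?_, by rw [h1, hy']⟩
        rw [h2, ← hy']; positivity
    · rw [h0, h1, h2, hz1, hz2]
      linear_combination (-(y * z 0)) * hEt
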